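/- With notation as in the successor construction and assuming l = |P| ≥ 2: every w ∈ P can be written uniquely in the form w = u‖a_j‖a_0^t with u a finite word over A_m, 1 ≤ j ≤ m−1, and t ≥ 0; and for each 1 ≤ i ≤ k, the i-th successor of w is given by the closed formula (w)'_i = u‖a_{m−1+(m−1−j)k+i}. -/

import Mathlib

namespace Paper

/-- The finite word `w` is a prefix of the infinite word `ζ`. -/
def IsPref {n : ℕ} (w : List (Fin n)) (ζ : ℕ → Fin n) : Prop :=
  ∀ (i : ℕ) (h : i < w.length), w[i]'h = ζ i

/-- Dictionary order on finite words. -/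
def DictLe {N : ℕ} (u v : List (Fin N)) : Prop :=
  u <+: v ∨ ∃ (x s t : List (Fin N)) (α β : Fin N),
    α < β ∧ u = x ++ α :: s ∧ v = x ++ β :: t

/-- Strict dictionary order. -/
def DictLt {N : ℕ} (u v : List (Fin N)) : Prop := DictLe u v ∧ u ≠ v

/-- The candidate set at a given stage of the successor recursion for the code
enumerated by `p`: words of the form `x‖a_j` with `x` a strict prefix of an element
of `P`, `m ≤ j ≤ n-1`, which are dictionary-greater than `p s` and have not been
chosen at an earlier stage (`prev`). -/
def Cand {N : ℕ} (m : ℕ) {l : ℕ} (p : Fin l → List (Fin N)) (s : Fin l)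
    (prev : Set (List (Fin N))) : Set (List (Fin N)) :=
  {w | (∃ x : List (Fin N), (∃ u : Fin l, x <+: p u ∧ x ≠ p u) ∧
        ∃ j : Fin N, m ≤ (j : ℕ) ∧ w = x ++ [j]) ∧
       DictLt (p s) w ∧ w ∉ prev}

/-- The set of successors chosen at stages strictly earlier than stage `(s, i)`,
where stages are ordered lexicographically: first in `s`, then in `i`. -/
def Prev {N l k : ℕ} (f : Fin l → Fin k → List (Fin N)) (s : Fin l) (i : Fin k) :
    Set (List (Fin N)) :=
  {w | ∃ (s' : Fin l) (i' : Fin k), (s' < s ∨ (s' = s ∧ i' < i)) ∧ w = f s' i'}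

/-- `f` is the successor assignment for the code enumerated by `p`:
`f s i` (the `i`-th successor `(p_s)'_i`) is the dictionary-least element of the
candidate set at stage `(s, i)`. -/
def IsSuccAssign {N l k : ℕ} (m : ℕ) (p : Fin l → List (Fin N))
    (f : Fin l → Fin k → List (Fin N)) : Prop :=
  ∀ (s : Fin l) (i : Fin k),
    f s i ∈ Cand m p s (Prev f s i) ∧
    ∀ w ∈ Cand m p s (Prev f s i), DictLe (f s i) w

section Aux

variable {N : ℕ}

local notation "LexLt" => List.Lex (fun (a b : Fin N) => a < b)

lemma lex_append_cons {z X Y : List (Fin N)} {α β : Fin N} (h : α < β) :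
    LexLt (z ++ α :: X) (z ++ β :: Y) := by
  induction z with
  | nil => exact List.Lex.rel h
  | cons a z ih => exact List.Lex.cons ih

lemma lex_of_prefix_ne {u v : List (Fin N)} (h : u <+: v) (hne : u ≠ v) :
    LexLt u v := by
  obtain ⟨d, rfl⟩ := h
  induction u with
  | nil =>
    cases d with
    | nil => simp at hne
    | cons a d => exact List.Lex.nil
  | cons a u ih =>
    exact List.Lex.cons (ih (by simpa using hne))

lemma lex_asymm' {u v : List (Fin N)} (h : LexLt u v) (h' : LexLt v u) : False :=
  (List.Lex.asymm (α := Fin N) (fun a b => a < b)).asymm u v h h'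

lemma lex_ne {u v : List (Fin N)} (h : LexLt u v) : u ≠ v := by
  intro he
  exact lex_asymm' h (he ▸ h)

lemma dictLe_of_lex {u v : List (Fin N)} (h : LexLt u v) : DictLe u v := by
  induction h with
  | nil => exact Or.inl (List.nil_prefix)
  | @rel a l b l' hab => exact Or.inr ⟨[], l, l', a, b, hab, rfl, rfl⟩
  | @cons a l l' h ih =>
    rcases ih with h' | ⟨x, s, t, α, β, hab, rfl, rfl⟩
    · obtain ⟨d, hd⟩ := h'
      exact Or.inl ⟨d, by rw [List.cons_append, hd]⟩
    · exact Or.inr ⟨a :: x, s, t, α, β, hab, rfl, rfl⟩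

lemma dictLt_iff_lex {u v : List (Fin N)} : DictLt u v ↔ LexLt u v := by
  constructor
  · rintro ⟨hle, hne⟩
    rcases hle with h | ⟨x, s, t, α, β, hab, rfl, rfl⟩
    · exact lex_of_prefix_ne h hne
    · exact lex_append_cons hab
  · intro h
    refine ⟨dictLe_of_lex h, lex_ne h⟩

lemma dictLe_iff_lex {u v : List (Fin N)} : DictLe u v ↔ u = v ∨ LexLt u v := by
  constructor
  · intro h
    by_cases hne : u = v
    · exact Or.inl hne
    · exact Or.inr (dictLt_iff_lex.mp ⟨h, hne⟩)
  · rintro (rfl | h)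
    · exact Or.inl (List.prefix_refl u)
    · exact dictLe_of_lex h

lemma lex_trichotomy (u v : List (Fin N)) : LexLt u v ∨ u = v ∨ LexLt v u :=
  trichotomous_of (List.Lex (fun (a b : Fin N) => a < b)) u v

lemma lex_append_cons_inv {z X Y : List (Fin N)} {α β : Fin N}
    (h : LexLt (z ++ α :: X) (z ++ β :: Y)) :
    α < β ∨ (α = β ∧ LexLt X Y) := by
  induction z with
  | nil =>
    cases h with
    | rel h => exact Or.inl h
    | cons h => exact Or.inr ⟨rfl, h⟩
  | cons a z ih =>
    cases h with
    | rel h => exact absurd h (lt_irrefl a)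
    | cons h => exact ih h

lemma lex_append_singleton_inv {z : List (Fin N)} {a c : Fin N}
    (h : LexLt (z ++ [a]) (z ++ [c])) : a < c := by
  rcases lex_append_cons_inv h with h | ⟨_, h⟩
  · exact h
  · cases h

lemma prefix_or_diverge (x u : List (Fin N)) :
    x <+: u ∨ u <+: x ∨ ∃ (z : List (Fin N)) (α β : Fin N) (X Y : List (Fin N)),
      α ≠ β ∧ x = z ++ α :: X ∧ u = z ++ β :: Y := by
  induction x generalizing u with
  | nil => exact Or.inl (List.nil_prefix)
  | cons a x ih =>
    cases u with
    | nil => exact Or.inr (Or.inl (List.nil_prefix))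
    | cons b u =>
      by_cases hab : a = b
      · subst hab
        rcases ih u with h | h | ⟨z, α, β, X, Y, hne, rfl, rfl⟩
        · obtain ⟨d, rfl⟩ := h
          exact Or.inl ⟨d, rfl⟩
        · obtain ⟨d, rfl⟩ := h
          exact Or.inr (Or.inl ⟨d, rfl⟩)
        · exact Or.inr (Or.inr ⟨a :: z, α, β, X, Y, hne, rfl, rfl⟩)
      · exact Or.inr (Or.inr ⟨[], a, b, x, u, hab, rfl, rfl⟩)

lemma isPref_zext_iff (L w : List (Fin N)) (z0 : Fin N) :
    IsPref w (fun i => L.getD i z0) ↔ w <+: L ∨ ∃ t, w = L ++ List.replicate t z0 := by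
  constructor
  · intro h
    by_cases hlen : w.length ≤ L.length
    · left
      have : w = L.take w.length := by
        apply List.ext_getElem
        · simp [hlen]
        · intro i h1 h2
          have hthis : w[i]'h1 = L.getD i z0 := h i h1
          rw [List.getD_eq_getElem L z0 (lt_of_lt_of_le h1 hlen)] at hthis
          simpa using hthis
      rw [this]
      exact List.take_prefix _ _
    · right
      refine ⟨w.length - L.length, ?_⟩
      apply List.ext_getElem
      · simp; omega
      · intro i h1 h2
        have hi : w[i]'h1 = L.getD i z0 := h i h1
        by_cases hil : i < L.length
        · rw [List.getElem_append_left hil]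
          rw [List.getD_eq_getElem L z0 hil] at hi
          exact hi
        · rw [List.getD_eq_default L z0 (by omega)] at hi
          rw [List.getElem_append_right (show L.length ≤ i by omega)]
          simp [hi]
  · rintro (h | ⟨t, rfl⟩)
    · intro i hi
      obtain ⟨d, rfl⟩ := h
      exact ((List.getD_eq_getElem (w ++ d) z0 (by simp only [List.length_append]; omega)).trans
        (List.getElem_append_left hi)).symm
    · intro i hi
      show (L ++ List.replicate t z0)[i]'hi = L.getD i z0
      by_cases hil : i < L.length
      · rw [List.getElem_append_left hil]
        exact (List.getD_eq_getElem L z0 hil).symm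
      · rw [List.getElem_append_right (show L.length ≤ i by omega)]
        rw [List.getD_eq_default L z0 (by omega)]
        simp

lemma exists_decomp (z0 : Fin N) (L : List (Fin N)) (hz : ∃ a ∈ L, a ≠ z0) :
    ∃ u j t, j ≠ z0 ∧ L = u ++ j :: List.replicate t z0 := by
  induction L using List.reverseRecOn with
  | nil => simp at hz
  | append_singleton M b ih =>
    by_cases hb : b = z0
    · have hz' : ∃ a ∈ M, a ≠ z0 := by
        obtain ⟨a, ha, hane⟩ := hz
        rcases List.mem_append.mp ha with h | h
        · exact ⟨a, h, hane⟩
        · simp at h; exact absurd (h.trans hb) hane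
      obtain ⟨u, j, t, hj, rfl⟩ := ih hz'
      refine ⟨u, j, t + 1, hj, ?_⟩
      rw [List.replicate_succ']
      simp [hb]
    · exact ⟨M, b, 0, hb, by simp⟩

lemma decomp_unique {u₁ u₂ : List (Fin N)} {j₁ j₂ : Fin N} {t₁ t₂ : ℕ} {z0 : Fin N}
    (h1 : j₁ ≠ z0) (h2 : j₂ ≠ z0)
    (he : u₁ ++ j₁ :: List.replicate t₁ z0 = u₂ ++ j₂ :: List.replicate t₂ z0) :
    u₁ = u₂ ∧ j₁ = j₂ ∧ t₁ = t₂ := by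
  have he' : (u₁ ++ [j₁]) ++ List.replicate t₁ z0 = (u₂ ++ [j₂]) ++ List.replicate t₂ z0 := by
    simpa using he
  have hlen : u₁.length + 1 + t₁ = u₂.length + 1 + t₂ := by
    have := congrArg List.length he'
    simp at this
    omega
  rcases lt_trichotomy t₁ t₂ with ht | ht | ht
  · exfalso
    have hu : u₂.length + 1 ≤ u₁.length := by omega
    have hL : (u₁ ++ [j₁] ++ List.replicate t₁ z0)[u₁.length]'(by simp only [List.length_append, List.length_replicate, List.length_cons, List.length_nil]; omega) = j₁ := by
      rw [List.getElem_append_left (by simp)]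
      simp
    have hR : (u₂ ++ [j₂] ++ List.replicate t₂ z0)[u₁.length]'(by simp only [List.length_append, List.length_replicate, List.length_cons, List.length_nil]; omega) = z0 := by
      rw [List.getElem_append_right (by simp only [List.length_append, List.length_replicate, List.length_cons, List.length_nil]; omega)]
      simp
    have h3 : (u₁ ++ [j₁] ++ List.replicate t₁ z0)[u₁.length]'(by simp only [List.length_append, List.length_replicate, List.length_cons, List.length_nil]; omega)
        = (u₂ ++ [j₂] ++ List.replicate t₂ z0)[u₁.length]'(by simp only [List.length_append, List.length_replicate, List.length_cons, List.length_nil]; omega) :=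
      List.getElem_of_eq he' _
    exact h1 (hL.symm.trans (h3.trans hR))
  · have hul : u₁.length = u₂.length := by omega
    subst ht
    have h4 := List.append_inj he' (by simp [hul])
    have h5 := List.append_inj h4.1 hul
    refine ⟨h5.1, ?_, rfl⟩
    have := h5.2
    simpa using this
  · exfalso
    have hu : u₁.length + 1 ≤ u₂.length := by omega
    have hL : (u₂ ++ [j₂] ++ List.replicate t₂ z0)[u₂.length]'(by simp only [List.length_append, List.length_replicate, List.length_cons, List.length_nil]; omega) = j₂ := by
      rw [List.getElem_append_left (by simp)]
      simp
    have hR : (u₁ ++ [j₁] ++ List.replicate t₁ z0)[u₂.length]'(by simp only [List.length_append, List.length_replicate, List.length_cons, List.length_nil]; omega) = z0 := by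
      rw [List.getElem_append_right (by simp only [List.length_append, List.length_replicate, List.length_cons, List.length_nil]; omega)]
      simp
    have h3 : (u₁ ++ [j₁] ++ List.replicate t₁ z0)[u₂.length]'(by simp only [List.length_append, List.length_replicate, List.length_cons, List.length_nil]; omega)
        = (u₂ ++ [j₂] ++ List.replicate t₂ z0)[u₂.length]'(by simp only [List.length_append, List.length_replicate, List.length_cons, List.length_nil]; omega) :=
      List.getElem_of_eq he' _
    exact h2 (hL.symm.trans (h3.symm.trans hR))

lemma block_eq {k a b i i' : ℕ} (hi : i < k) (hi' : i' < k)
    (h : a * k + i = b * k + i') : a = b ∧ i = i' := by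
  rcases lt_trichotomy a b with hab | hab | hab
  · exfalso
    have h2 : (a + 1) * k ≤ b * k := Nat.mul_le_mul_right k (by omega)
    have h3 : (a + 1) * k = a * k + k := by ring
    omega
  · subst hab
    omega
  · exfalso
    have h2 : (b + 1) * k ≤ a * k := Nat.mul_le_mul_right k (by omega)
    have h3 : (b + 1) * k = b * k + k := by ring
    omega

lemma split_first (z0 : Fin N) (y : List (Fin N)) :
    (∀ b ∈ y, b = z0) ∨ ∃ t' c y₂, c ≠ z0 ∧ y = List.replicate t' z0 ++ c :: y₂ := by
  induction y with
  | nil => left; simp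
  | cons b y ih =>
    by_cases hb : b = z0
    · rcases ih with h | ⟨t', c, y₂, hc, rfl⟩
      · left
        intro b' hb'
        rcases List.mem_cons.mp hb' with rfl | h'
        · exact hb
        · exact h _ h'
      · right
        exact ⟨t' + 1, c, y₂, hc, by rw [hb, List.replicate_succ]; simp⟩
    · right
      exact ⟨0, b, y, hb, by simp⟩

lemma concat_inj {A B : List (Fin N)} {a b : Fin N} (h : A ++ [a] = B ++ [b]) :
    A = B ∧ a = b := by
  have hlen : A.length = B.length := by
    have := congrArg List.length h
    simp at this
    omega
  have h2 := List.append_inj h hlen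
  exact ⟨h2.1, by simpa using h2.2⟩

lemma prefix_snoc {w A : List (Fin N)} {b : Fin N} (h : w <+: A ++ [b]) :
    w <+: A ∨ w = A ++ [b] := by
  by_cases hl : w.length ≤ A.length
  · exact Or.inl (List.prefix_of_prefix_length_le h (List.prefix_append A [b]) hl)
  · right
    have h2 := h.length_le
    simp at h2
    exact h.eq_of_length (by simp; omega)

end Aux

/-- **Birget's formula.** In the successor construction with
`l = |P| ≥ 2`: every `w ∈ P` can be written uniquely as `w = u‖a_j‖a_0^t` with `u`
a word over `A_m`, `1 ≤ j ≤ m-1` and `t ≥ 0`; and for each `1 ≤ i ≤ k` (here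
`i : Fin k` is zero-based, representing `i+1`) the `i+1`-st successor of `w` is
`(w)'_{i+1} = u‖a_{m-1+(m-1-j)k+(i+1)}`. -/
theorem stmt14 (m n k l : ℕ) (hm : 2 ≤ m) (hmn : m ≤ n) (hk : 1 ≤ k)
    (hnm : n - m = k * (m - 1)) (hl : 2 ≤ l)
    (q : Fin l → List (Fin n))
    (hqA : ∀ s : Fin l, ∀ a ∈ q s, (a : ℕ) < m)
    (hqcpc : ∀ ζ : ℕ → Fin n, (∀ i, (ζ i : ℕ) < m) →
      ∃! s : Fin l, IsPref (q s) ζ)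
    (p : Fin l → List (Fin n))
    (hp : ∀ s : Fin l, p s = (⟨m - 1, by omega⟩ : Fin n) :: q s)
    (hrev : ∀ s t : Fin l, s < t → DictLt (p t) (p s))
    (f : Fin l → Fin k → List (Fin n)) (hf : IsSuccAssign m p f) :
    ∀ s : Fin l,
      (∃! d : List (Fin n) × Fin n × ℕ,
        (∀ a ∈ d.1, (a : ℕ) < m) ∧
        1 ≤ (d.2.1 : ℕ) ∧ (d.2.1 : ℕ) ≤ m - 1 ∧
        p s = d.1 ++ d.2.1 :: List.replicate d.2.2 (⟨0, by omega⟩ : Fin n)) ∧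
      ∀ (u : List (Fin n)) (j : Fin n) (t : ℕ),
        (∀ a ∈ u, (a : ℕ) < m) → 1 ≤ (j : ℕ) → (j : ℕ) ≤ m - 1 →
        p s = u ++ j :: List.replicate t (⟨0, by omega⟩ : Fin n) →
        ∀ i : Fin k, ∃ c : Fin n,
          (c : ℕ) = m - 1 + (m - 1 - (j : ℕ)) * k + ((i : ℕ) + 1) ∧
          f s i = u ++ [c] := by
  have hn : n = m + k * (m - 1) := by omega
  have hn0 : 0 < n := by omega
  haveI : NeZero n := ⟨by omega⟩
  -- all letters of p are < m
  have hpA : ∀ s : Fin l, ∀ a ∈ p s, (a : ℕ) < m := by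
    intro s a ha
    rw [hp s] at ha
    rcases List.mem_cons.mp ha with rfl | h
    · simp; omega
    · exact hqA s a h
  -- p is prefix-free
  have pf : ∀ s r : Fin l, s ≠ r → ¬ (p s <+: p r) := by
    intro s r hne hpre
    rw [hp s, hp r] at hpre
    have hq : q s <+: q r := (List.cons_prefix_cons.mp hpre).2
    have hζm : ∀ i, (((fun i => (q r).getD i (0 : Fin n)) i : Fin n) : ℕ) < m := by
      intro i
      by_cases hi : i < (q r).length
      · simp only
        rw [List.getD_eq_getElem _ _ hi]
        exact hqA r _ (List.getElem_mem hi)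
      · simp only
        rw [List.getD_eq_default _ _ (by omega)]
        simp
        omega
    obtain ⟨w, hw, huniq⟩ := hqcpc _ hζm
    have h1 : IsPref (q r) (fun i => (q r).getD i (0 : Fin n)) :=
      (isPref_zext_iff _ _ _).mpr (Or.inr ⟨0, by simp⟩)
    have h2 : IsPref (q s) (fun i => (q r).getD i (0 : Fin n)) :=
      (isPref_zext_iff _ _ _).mpr (Or.inl hq)
    exact hne ((huniq s h2).trans (huniq r h1).symm)
  have pinj : ∀ s r : Fin l, p s = p r → s = r := by
    intro s r h
    by_contra hne
    exact pf s r hne (h ▸ List.prefix_refl _)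
  have hlt_of : ∀ s r : Fin l, DictLt (p s) (p r) → r < s := by
    intro s r h
    rcases lt_trichotomy r s with h' | h' | h'
    · exact h'
    · subst h'
      exact absurd rfl (lex_ne (dictLt_iff_lex.mp h))
    · exact absurd (dictLt_iff_lex.mp (hrev s r h')) (fun hh => lex_asymm' (dictLt_iff_lex.mp h) hh)
  have hnotpre : ∀ (r₀ : Fin l) (x : List (Fin n)), x <+: p r₀ → x ≠ p r₀ →
      ∀ s : Fin l, ¬ (p s <+: x) := by
    intro r₀ x hxp hxne s hs
    by_cases hsr : s = r₀
    · subst hsr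
      have h1 := hs.length_le
      have h2 := hxp.length_le
      exact hxne (hxp.eq_of_length (by omega))
    · exact pf s r₀ hsr (hs.trans hxp)
  -- completeness instantiation
  have hcomp : ∀ (r₀ : Fin l) (x : List (Fin n)) (jn : ℕ) (hjn : jn < n),
      x <+: p r₀ → x ≠ p r₀ → x ≠ [] → 1 ≤ jn → jn < m →
      ∃ (r' : Fin l) (t'' : ℕ),
        p r' = x ++ (⟨jn, hjn⟩ : Fin n) :: List.replicate t'' (0 : Fin n) := by
    intro r₀ x jn hjn hxp hxne hxnil hj1 hjm
    obtain ⟨hd, x', rfl⟩ : ∃ hd x', x = hd :: x' := by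
      cases x with
      | nil => exact absurd rfl hxnil
      | cons a b => exact ⟨a, b, rfl⟩
    rw [hp r₀] at hxp
    obtain ⟨hhd, hx'⟩ := List.cons_prefix_cons.mp hxp
    have hζm : ∀ i, (((fun i => (x' ++ [(⟨jn, hjn⟩ : Fin n)]).getD i (0 : Fin n)) i : Fin n) : ℕ) < m := by
      intro i
      by_cases hi : i < (x' ++ [(⟨jn, hjn⟩ : Fin n)]).length
      · simp only
        rw [List.getD_eq_getElem _ _ hi]
        have hmem := List.getElem_mem hi
        rcases List.mem_append.mp hmem with h | h
        · exact hqA r₀ _ (hx'.subset h)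
        · simp at h
          rw [h]
          exact hjm
      · simp only
        rw [List.getD_eq_default _ _ (by omega)]
        simp
        omega
    obtain ⟨r', hr', -⟩ := hqcpc _ hζm
    rcases (isPref_zext_iff _ _ _).mp hr' with hpre | ⟨t, hteq⟩
    · rcases prefix_snoc hpre with h | h
      · -- q r' <+: x' : contradiction with prefix-freeness
        exfalso
        have hpp : p r' <+: hd :: x' := by
          rw [hp r', hhd]
          exact List.cons_prefix_cons.mpr ⟨rfl, h⟩
        have hpp2 : p r' <+: p r₀ := hpp.trans (by rw [hp r₀]; exact hxp)
        by_cases hrr : r' = r₀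
        · subst hrr
          have h1 := hpp.length_le
          have h2 : (hd :: x') <+: p r' := by rw [hp r']; exact hxp
          have h3 := h2.length_le
          exact hxne (h2.eq_of_length (by omega))
        · exact pf r' r₀ hrr hpp2
      · exact ⟨r', 0, by rw [hp r', h, hhd]; simp⟩
    · exact ⟨r', t, by rw [hp r', hteq, hhd]; simp⟩
  -- canonical decomposition
  have hdex : ∀ s : Fin l, ∃ u j t, j ≠ (0 : Fin n) ∧
      p s = u ++ j :: List.replicate t (0 : Fin n) := by
    intro s
    apply exists_decomp
    refine ⟨⟨m - 1, by omega⟩, ?_, ?_⟩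
    · rw [hp s]; exact List.mem_cons_self
    · simp [Fin.ext_iff]
      omega
  choose U J T hJz hP using hdex
  have hJ1 : ∀ s, 1 ≤ (J s : ℕ) := by
    intro s
    by_contra h
    exact hJz s (Fin.ext (by simpa using h))
  have hJmem : ∀ s, J s ∈ p s := by
    intro s
    rw [hP s]
    simp
  have hJm : ∀ s, (J s : ℕ) ≤ m - 1 := by
    intro s
    have := hpA s _ (hJmem s)
    omega
  have hUm : ∀ s, ∀ a ∈ U s, (a : ℕ) < m := by
    intro s a ha
    apply hpA s
    rw [hP s]
    exact List.mem_append.mpr (Or.inl ha)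
  have hUpre : ∀ s, U s <+: p s := fun s => ⟨_, (hP s).symm⟩
  have hUne : ∀ s, U s ≠ p s := by
    intro s h
    have := congrArg List.length (hP s)
    rw [← h] at this
    simp at this
  have hUnil : ∀ s, U s = [] → (J s : ℕ) = m - 1 := by
    intro s h
    have h2 : p s = J s :: List.replicate (T s) (0 : Fin n) := by
      rw [hP s, h]; simp
    rw [hp s] at h2
    have := (List.cons.injEq _ _ _ _).mp h2
    rw [← this.1]
  -- the successor letter
  have hCb : ∀ (s : Fin l) (i : Fin k), m - 1 + (m - 1 - (J s : ℕ)) * k + ((i : ℕ) + 1) < n := by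
    intro s i
    have h1 : (m - 1 - (J s : ℕ)) * k ≤ (m - 2) * k := Nat.mul_le_mul_right k (by have := hJ1 s; omega)
    have h2 : k * (m - 1) = (m - 2) * k + k := by
      rw [show m - 1 = (m - 2) + 1 by omega]
      ring
    have := i.isLt
    omega
  obtain ⟨C, hCval⟩ : ∃ C : Fin l → Fin k → Fin n, ∀ s i,
      (C s i : ℕ) = m - 1 + (m - 1 - (J s : ℕ)) * k + ((i : ℕ) + 1) :=
    ⟨fun s i => ⟨_, hCb s i⟩, fun s i => rfl⟩
  have hCm : ∀ s i, m ≤ (C s i : ℕ) := by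
    intro s i
    rw [hCval]
    omega
  -- the main induction
  have key : ∀ (M : ℕ) (s : Fin l) (i : Fin k), (s : ℕ) * k + (i : ℕ) = M →
      f s i = U s ++ [C s i] := by
    intro M
    induction M using Nat.strong_induction_on with
    | _ M ih =>
    intro s i hM
    have hPrevIn : ∀ (s' : Fin l) (i' : Fin k), (s' < s ∨ (s' = s ∧ i' < i)) →
        f s' i' = U s' ++ [C s' i'] := by
      intro s' i' hlt'
      apply ih ((s' : ℕ) * k + (i' : ℕ)) _ s' i' rfl
      subst hM
      rcases hlt' with h | ⟨rfl, h⟩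
      · have h1 : (s' : ℕ) + 1 ≤ (s : ℕ) := Fin.lt_def.mp h
        have h2 : ((s' : ℕ) + 1) * k ≤ (s : ℕ) * k := Nat.mul_le_mul_right k h1
        have h3 : ((s' : ℕ) + 1) * k = (s' : ℕ) * k + k := by ring
        have := i'.isLt
        omega
      · have := Fin.lt_def.mp h
        omega
    obtain ⟨hmem, hmin⟩ := hf s i
    -- the target is a candidate
    have htgt : (U s ++ [C s i]) ∈ Cand m p s (Prev f s i) := by
      refine ⟨⟨U s, ⟨s, hUpre s, fun h => hUne s h⟩, C s i, hCm s i, rfl⟩, ?_, ?_⟩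
      · apply dictLt_iff_lex.mpr
        rw [hP s]
        exact lex_append_cons (Fin.lt_def.mpr (by have := hJm s; have := hCm s i; omega))
      · rintro ⟨s', i', hlt', heq⟩
        rw [hPrevIn s' i' hlt'] at heq
        obtain ⟨hU', hC'⟩ := concat_inj heq
        have hCv : m - 1 + (m - 1 - (J s : ℕ)) * k + ((i : ℕ) + 1)
            = m - 1 + (m - 1 - (J s' : ℕ)) * k + ((i' : ℕ) + 1) := by
          rw [← hCval, ← hCval, hC']
        by_cases hJ' : (J s : ℕ) = (J s' : ℕ)
        · have hprod : (m - 1 - (J s : ℕ)) * k = (m - 1 - (J s' : ℕ)) * k := by rw [hJ']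
          have hi : (i : ℕ) = (i' : ℕ) := by omega
          rcases hlt' with hss | ⟨rfl, hii⟩
          · have hsne : s ≠ s' := (ne_of_lt hss).symm
            have hJeq : J s = J s' := Fin.ext hJ'
            rcases lt_trichotomy (T s) (T s') with h | h | h
            · apply pf s s' hsne
              refine ⟨List.replicate (T s' - T s) (0 : Fin n), ?_⟩
              rw [hP s, hP s', hU', hJeq]
              simp only [List.append_assoc, List.cons_append, List.append_cancel_left_eq,
                List.cons.injEq, true_and]
              rw [← List.replicate_add, show T s + (T s' - T s) = T s' from by omega]
            · apply hsne
              apply pinj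
              rw [hP s, hP s', hU', hJeq, h]
            · apply pf s' s (Ne.symm hsne)
              refine ⟨List.replicate (T s - T s') (0 : Fin n), ?_⟩
              rw [hP s, hP s', hU', hJeq]
              simp only [List.append_assoc, List.cons_append, List.append_cancel_left_eq,
                List.cons.injEq, true_and]
              rw [← List.replicate_add, show T s' + (T s - T s') = T s from by omega]
          · have := Fin.lt_def.mp hii
            omega
        · obtain ⟨hAB, -⟩ := block_eq i.isLt i'.isLt
            (show (m - 1 - (J s : ℕ)) * k + (i : ℕ) = (m - 1 - (J s' : ℕ)) * k + (i' : ℕ) by omega)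
          have := hJ1 s; have := hJ1 s'; have := hJm s; have := hJm s'
          omega
    have hle1 : DictLe (f s i) (U s ++ [C s i]) := hmin _ htgt
    by_contra hne
    have hlex : List.Lex (fun (a b : Fin n) => a < b) (f s i) (U s ++ [C s i]) := by
      rcases dictLe_iff_lex.mp hle1 with h | h
      · exact absurd h hne
      · exact h
    obtain ⟨⟨x, ⟨r₀, hxp, hxne⟩, a, ham, hfx⟩, hplt, hnprev⟩ := hmem
    apply hnprev
    rw [hfx]
    rw [hfx] at hlex
    -- arithmetic setup for the letter a
    obtain ⟨q', i2, hdm, hi2k⟩ : ∃ q' i2, k * q' + i2 = (a : ℕ) - m ∧ i2 < k :=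
      ⟨((a : ℕ) - m) / k, ((a : ℕ) - m) % k, Nat.div_add_mod _ _, Nat.mod_lt _ (by omega)⟩
    have haval : (a : ℕ) = m + k * q' + i2 := by omega
    have hq'm : q' < m - 1 := by
      apply Nat.lt_of_mul_lt_mul_left (a := k)
      have := a.isLt
      omega
    set j2 := m - 1 - q' with hj2def
    have hj21 : 1 ≤ j2 := by omega
    have hj2m : j2 ≤ m - 1 := by omega
    have hj2n : j2 < n := by omega
    have hmc : (m - 1 - j2) * k = k * q' := by
      rw [show m - 1 - j2 = q' by omega, Nat.mul_comm]
    have haval2 : (a : ℕ) = m - 1 + (m - 1 - j2) * k + (i2 + 1) := by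
      rw [hmc]; omega
    have haU : ∀ b ∈ x, (b : ℕ) < m := fun b hb => hpA r₀ b (hxp.subset hb)
    -- the "consume" helper
    have finish : ∀ (r' : Fin l) (t'' : ℕ),
        p r' = x ++ (⟨j2, hj2n⟩ : Fin n) :: List.replicate t'' (0 : Fin n) →
        r' < s → x ++ [a] ∈ Prev f s i := by
      intro r' t'' hr' hr's
      have hdu := decomp_unique (u₁ := x) (j₁ := (⟨j2, hj2n⟩ : Fin n)) (t₁ := t'')
        (show (⟨j2, hj2n⟩ : Fin n) ≠ (0 : Fin n) by simp [Fin.ext_iff]; omega)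
        (hJz r') (hr'.symm.trans (hP r'))
      refine ⟨r', ⟨i2, hi2k⟩, Or.inl hr's, ?_⟩
      rw [hPrevIn r' ⟨i2, hi2k⟩ (Or.inl hr's), ← hdu.1]
      have : a = C r' ⟨i2, hi2k⟩ := by
        apply Fin.ext
        rw [hCval]
        have hJr : (J r' : ℕ) = j2 := by rw [← hdu.2.1]
        rw [hJr]
        exact haval2
      rw [← this]
    by_cases hxeq : x = U s
    · -- x = U s : smaller letter at the same position
      subst hxeq
      have haC : a < C s i := lex_append_singleton_inv hlex
      have haCv : (a : ℕ) < m - 1 + (m - 1 - (J s : ℕ)) * k + ((i : ℕ) + 1) := by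
        have := Fin.lt_def.mp haC
        rw [hCval] at this
        exact this
      have hjJ : (J s : ℕ) ≤ j2 := by
        have h1 : k * q' < (m - 1 - (J s : ℕ)) * k + k := by omega
        have h2 : k * q' < k * ((m - 1 - (J s : ℕ)) + 1) := by
          rw [Nat.mul_add, Nat.mul_one, Nat.mul_comm k (m - 1 - (J s : ℕ))]
          omega
        have h3 := Nat.lt_of_mul_lt_mul_left h2
        have h4 := hJm s
        omega
      by_cases hjeq : j2 = (J s : ℕ)
      · -- consumed at stage (s, i2), i2 < i
        rw [hjeq] at haval2
        have hii : i2 < (i : ℕ) := by omega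
        refine ⟨s, ⟨i2, hi2k⟩, Or.inr ⟨rfl, Fin.lt_def.mpr hii⟩, ?_⟩
        rw [hPrevIn s ⟨i2, hi2k⟩ (Or.inr ⟨rfl, Fin.lt_def.mpr hii⟩)]
        have : a = C s ⟨i2, hi2k⟩ := by
          apply Fin.ext
          rw [hCval]
          exact haval2
        rw [← this]
      · -- consumed at an earlier s' with same u and bigger j
        have hjgt : (J s : ℕ) < j2 := by omega
        have hUnil' : U s ≠ [] := by
          intro h
          have := hUnil s h
          omega
        obtain ⟨r', t'', hr'⟩ := hcomp s (U s) j2 hj2n (hUpre s) (hUne s) hUnil'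
          (by omega) (by omega)
        have hr's : r' < s := by
          apply hlt_of
          apply dictLt_iff_lex.mpr
          rw [hP s, hr']
          exact lex_append_cons (Fin.lt_def.mpr hjgt)
        exact finish r' t'' hr' hr's
    · rcases prefix_or_diverge x (U s) with hpd | hpd | ⟨z, α, β, X, Y, hne', hxz, hUz⟩
      · -- x a strict prefix of U s : impossible (candidate would be bigger)
        exfalso
        obtain ⟨d, hd⟩ := hpd
        cases d with
        | nil => exact hxeq (by simpa using hd)
        | cons e y =>
          rw [← hd] at hlex
          simp only [List.append_assoc, List.cons_append, List.nil_append] at hlex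
          have hev : (e : ℕ) < m := hUm s e (by rw [← hd]; simp)
          rcases lex_append_cons_inv hlex with h | ⟨h, -⟩
          · have := Fin.lt_def.mp h
            omega
          · have : (a : ℕ) = (e : ℕ) := congrArg Fin.val h
            omega
      · -- U s is a strict prefix of x
        obtain ⟨d, hd⟩ := hpd
        cases d with
        | nil =>
          have : U s = x := by simpa using hd
          exact absurd this.symm hxeq
        | cons e y =>
          have hxrepr : x = U s ++ e :: y := hd.symm
          have hev : (e : ℕ) < m := haU e (by rw [hxrepr]; simp)
          have hplex := dictLt_iff_lex.mp hplt
          rw [hfx, hP s, hxrepr] at hplex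
          simp only [List.append_assoc, List.cons_append] at hplex
          -- get the witness r'
          have hxnil : x ≠ [] := by rw [hxrepr]; simp
          obtain ⟨r', t'', hr'⟩ := hcomp r₀ x j2 hj2n hxp hxne hxnil (by omega) (by omega)
          rcases lex_append_cons_inv hplex with hJe | ⟨hJe, hrest⟩
          · -- J s < e
            have hr's : r' < s := by
              apply hlt_of
              apply dictLt_iff_lex.mpr
              rw [hP s, hr', hxrepr]
              simpa only [List.append_assoc, List.cons_append] using
                lex_append_cons (z := U s) (X := List.replicate (T s) (0 : Fin n))
                  (Y := y ++ (⟨j2, hj2n⟩ : Fin n) :: List.replicate t'' (0 : Fin n)) hJe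
            exact finish r' t'' hr' hr's
          · -- J s = e; look at the first nonzero letter of y
            rcases split_first (0 : Fin n) y with hall | ⟨t', c, y₂, hcne, hysplit⟩
            · obtain ⟨Ylen, hyrep⟩ : ∃ L, y = List.replicate L (0 : Fin n) :=
                ⟨y.length, List.eq_replicate_iff.mpr ⟨rfl, hall⟩⟩
              have hylt : Ylen < T s := by
                by_contra hge
                push_neg at hge
                apply hnotpre r₀ x hxp hxne s
                refine ⟨List.replicate (Ylen - T s) (0 : Fin n), ?_⟩
                rw [hP s, hxrepr, hyrep, ← hJe]
                simp only [List.append_assoc, List.cons_append, List.append_cancel_left_eq,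
                  List.cons.injEq, true_and]
                rw [← List.replicate_add, show T s + (Ylen - T s) = Ylen from by omega]
              have hTsplit : List.replicate (T s) (0 : Fin n)
                  = List.replicate Ylen (0 : Fin n) ++ (0 : Fin n) :: List.replicate (T s - Ylen - 1) (0 : Fin n) := by
                conv_lhs => rw [show T s = Ylen + (T s - Ylen - 1 + 1) from by omega]
                rw [List.replicate_add, List.replicate_succ]
              have hr's : r' < s := by
                apply hlt_of
                apply dictLt_iff_lex.mpr
                rw [hP s, hr', hxrepr, hyrep, ← hJe, hTsplit]
                have h0j : (0 : Fin n) < (⟨j2, hj2n⟩ : Fin n) := Fin.lt_def.mpr (by simp; omega)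
                simpa only [List.append_assoc, List.cons_append] using
                  lex_append_cons (z := U s ++ J s :: List.replicate Ylen (0 : Fin n))
                    (X := List.replicate (T s - Ylen - 1) (0 : Fin n))
                    (Y := List.replicate t'' (0 : Fin n)) h0j
              exact finish r' t'' hr' hr's
            · have hylt : t' < T s := by
                by_contra hge
                push_neg at hge
                apply hnotpre r₀ x hxp hxne s
                refine ⟨List.replicate (t' - T s) (0 : Fin n) ++ c :: y₂, ?_⟩
                rw [hP s, hxrepr, hysplit, ← hJe]
                simp only [List.append_assoc, List.cons_append, List.append_cancel_left_eq,
                  List.cons.injEq, true_and]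
                rw [← List.append_assoc, ← List.replicate_add,
                  show T s + (t' - T s) = t' from by omega]
              have hTsplit : List.replicate (T s) (0 : Fin n)
                  = List.replicate t' (0 : Fin n) ++ (0 : Fin n) :: List.replicate (T s - t' - 1) (0 : Fin n) := by
                conv_lhs => rw [show T s = t' + (T s - t' - 1 + 1) from by omega]
                rw [List.replicate_add, List.replicate_succ]
              have h0c : (0 : Fin n) < c := by
                have hcv : (c : ℕ) ≠ 0 := fun h => hcne (Fin.ext (by simp [h]))
                apply Fin.lt_def.mpr
                simp
                exact Nat.pos_of_ne_zero hcv
              have hr's : r' < s := by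
                apply hlt_of
                apply dictLt_iff_lex.mpr
                rw [hP s, hr', hxrepr, hysplit, ← hJe, hTsplit]
                simpa only [List.append_assoc, List.cons_append] using
                  lex_append_cons (z := U s ++ J s :: List.replicate t' (0 : Fin n))
                    (X := List.replicate (T s - t' - 1) (0 : Fin n))
                    (Y := y₂ ++ (⟨j2, hj2n⟩ : Fin n) :: List.replicate t'' (0 : Fin n)) h0c
              exact finish r' t'' hr' hr's
      · -- x and U s diverge : impossible
        exfalso
        rw [hxz] at hlex
        rw [hUz] at hlex
        simp only [List.append_assoc, List.cons_append] at hlex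
        rcases lex_append_cons_inv hlex with h | ⟨h, -⟩
        · -- α < β; but then p s > x ++ [a] contradicts hplt
          have hplex := dictLt_iff_lex.mp hplt
          rw [hfx, hP s, hUz, hxz] at hplex
          simp only [List.append_assoc, List.cons_append] at hplex
          rcases lex_append_cons_inv hplex with h2 | ⟨h2, -⟩
          · exact lt_asymm h h2
          · exact hne' h2.symm
        · exact hne' h
  -- conclusion
  intro s
  constructor
  · refine ⟨(U s, J s, T s), ⟨hUm s, hJ1 s, hJm s, hP s⟩, ?_⟩
    rintro ⟨u', j', t'⟩ ⟨h1, h2, h3, h4⟩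
    have hdu := decomp_unique (u₁ := u') (j₁ := j') (t₁ := t')
      (show j' ≠ (0 : Fin n) from fun h => by rw [h] at h2; simp at h2)
      (hJz s) (h4.symm.trans (hP s))
    simp only [Prod.mk.injEq]
    exact ⟨hdu.1, hdu.2.1, hdu.2.2⟩
  · intro u j t hu hj1 hjm hps i
    have hdu := decomp_unique (u₁ := u) (j₁ := j) (t₁ := t)
      (show j ≠ (0 : Fin n) from fun h => by rw [h] at hj1; simp at hj1)
      (hJz s) (hps.symm.trans (hP s))
    refine ⟨C s i, ?_, ?_⟩
    · rw [hCval, hdu.2.1]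
    · rw [hdu.1]
      exact key ((s : ℕ) * k + (i : ℕ)) s i rfl

end Paper
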